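/- Let Λ = {λ₁, λ₂, a+ib, a−ib} with λ₁, λ₂, a ∈ ℝ, b > 0, λ₁+λ₂−2|a| ≥ 0 and λ₁−λ₂−2b ≥ 0, and let ω₁, ω₂ be nonnegative reals satisfying: (i) 0 ≤ ωₖ ≤ λ₁; (ii) ω₁+ω₂ = (λ₁+λ₂+2a)/2; (iii) (2ω₁−a)(2ω₂−a) ≥ λ₁λ₂ + b²; (iv) ωₖ ≥ a for k=1,2. Then there exists a 4×4 centrosymmetric nonnegative matrix with spectrum Λ and diagonal entries ω₁, ω₂, ω₂, ω₁. -/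

import Mathlib

open Matrix Polynomial

/-- The n×n exchange (counteridentity) matrix. -/
def Jmat (n : ℕ) : Matrix (Fin n) (Fin n) ℝ :=
  Matrix.of fun i j => if (i : ℕ) + (j : ℕ) = n - 1 then 1 else 0

set_option maxHeartbeats 1000000 in
theorem complex_pair_prescribed_diagonal_centrosymmetric (l1 l2 a b : ℝ) (hb : 0 < b)
    (h1 : 0 ≤ l1 + l2 - 2 * |a|) (h2 : 0 ≤ l1 - l2 - 2 * b)
    (ω1 ω2 : ℝ)
    (hω1 : 0 ≤ ω1) (hω1' : ω1 ≤ l1) (hω2 : 0 ≤ ω2) (hω2' : ω2 ≤ l1)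
    (htr : ω1 + ω2 = (l1 + l2 + 2 * a) / 2)
    (hprod : l1 * l2 + b ^ 2 ≤ (2 * ω1 - a) * (2 * ω2 - a))
    (hωa1 : a ≤ ω1) (hωa2 : a ≤ ω2) :
    ∃ M : Matrix (Fin 4) (Fin 4) ℝ, Jmat 4 * M * Jmat 4 = M ∧ (∀ i j, 0 ≤ M i j) ∧
      (M.map Complex.ofReal).charpoly =
        (X - C (l1 : ℂ)) * (X - C (l2 : ℂ)) *
          (X - C (Complex.ofReal a + Complex.ofReal b * Complex.I)) *
          (X - C (Complex.ofReal a - Complex.ofReal b * Complex.I)) ∧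
      M 0 0 = ω1 ∧ M 1 1 = ω2 ∧ M 2 2 = ω2 ∧ M 3 3 = ω1 := by
  set p : ℝ := (2 * ω1 - a) * (2 * ω2 - a) - l1 * l2 with hp
  refine ⟨!![ω1, 1, 0, ω1 - a;
             (p - b^2)/2, ω2, ω2 - a, (p + b^2)/2;
             (p + b^2)/2, ω2 - a, ω2, (p - b^2)/2;
             ω1 - a, 0, 1, ω1], ?_, ?_, ?_, rfl, rfl, rfl, rfl⟩
  · ext i j
    fin_cases i <;> fin_cases j <;>
      simp [Jmat, Matrix.mul_apply, Fin.sum_univ_four,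
        show ((0 : Fin 4) : ℕ) = 0 from rfl, show ((1 : Fin 4) : ℕ) = 1 from rfl,
        show ((2 : Fin 4) : ℕ) = 2 from rfl, show ((3 : Fin 4) : ℕ) = 3 from rfl]
  · intro i j
    fin_cases i <;> fin_cases j <;> simp <;> nlinarith [sq_nonneg b]
  · have hl2 : (l2 : ℂ) = 2*(ω1:ℂ) + 2*(ω2:ℂ) - 2*(a:ℂ) - (l1:ℂ) := by
      have : l2 = 2*ω1 + 2*ω2 - 2*a - l1 := by linarith
      rw [this]; push_cast; ring
    rw [Matrix.charpoly]
    have hcm : ((!![ω1, 1, 0, ω1 - a;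
             (p - b^2)/2, ω2, ω2 - a, (p + b^2)/2;
             (p + b^2)/2, ω2 - a, ω2, (p - b^2)/2;
             ω1 - a, 0, 1, ω1]).map Complex.ofReal).charmatrix =
        !![X - C (ω1:ℂ), -C 1, 0, -C ((ω1 - a : ℝ) : ℂ);
           -C (((p - b^2)/2 : ℝ) : ℂ), X - C (ω2:ℂ), -C ((ω2 - a : ℝ) : ℂ), -C (((p + b^2)/2 : ℝ) : ℂ);
           -C (((p + b^2)/2 : ℝ) : ℂ), -C ((ω2 - a : ℝ) : ℂ), X - C (ω2:ℂ), -C (((p - b^2)/2 : ℝ) : ℂ);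
           -C ((ω1 - a : ℝ) : ℂ), 0, -C 1, X - C (ω1:ℂ)] := by
      ext i j
      fin_cases i <;> fin_cases j <;>
        simp [Matrix.charmatrix_apply_eq, Matrix.charmatrix_apply_ne, Matrix.map_apply]
    rw [hcm]
    apply Polynomial.funext
    intro x
    simp [Matrix.det_succ_row_zero, Fin.sum_univ_succ, Matrix.submatrix_apply,
      Fin.succ, Fin.succAbove, Fin.castSucc, Fin.castAdd, Fin.castLE,
      Matrix.cons_val', Matrix.cons_val_zero, Matrix.cons_val_one, Matrix.head_cons,
      Matrix.cons_val_fin_one, Matrix.head_fin_const, eval_mul, eval_sub, eval_add, eval_C, eval_X, eval_neg]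
    push_cast
    rw [hl2]
    ring_nf
    simp only [Complex.I_sq]
    push_cast
    rw [hp]
    push_cast
    rw [hl2]
    ring
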